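/- Let x : [0,T] → ℝ^n be absolutely continuous with |ẋ(t)| ≤ M(1 + |x(t)| + |u(t)|)(1 + |u̇(t)|) a.e., where u : [0,T] → U is absolutely continuous with values in a compact set U having the Whitney property with constant C ≥ 1. Fix τ ∈ [0,T) and a target point ū ∈ U. Define ǔ(t) = u(t) for t ∈ [0,τ) and ǔ(t) = ũ((t−τ)/(T−τ)) for t ∈ (τ, T], where ũ : [0,1] → U is an absolutely continuous path from u(τ) to ū with Var(ũ) ≤ C|u(τ) − ū|. Then ǔ is absolutely continuous on [0,T] with Var_{[0,T]}(ǔ) ≤ Var_{[0,τ]}(u) + C|u(τ) − ū|, and any solution x̌ of the same differential inequality with input ǔ agreeing with x at τ satisfies |x̌(T) − x̌(τ)| ≤ M(1 + sup_{[τ,T]}(|x̌| + |ǔ|))·(T − τ + C|u(τ) − ū|). -/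

import Mathlib

open Set MeasureTheory Filter Topology
open scoped ENNReal NNReal

/-- Absolute continuity on `[a,b]` via the integral characterization. -/
def AbsCont {E : Type*} [NormedAddCommGroup E] [NormedSpace ℝ E] (f : ℝ → E) (a b : ℝ) : Prop :=
  ∃ f' : ℝ → E, IntervalIntegrable f' volume a b ∧
    ∀ t ∈ Set.Icc a b, f t = f a + ∫ τ in a..t, f' τ

section Aux

variable {E : Type*} [NormedAddCommGroup E] [NormedSpace ℝ E]

/-- distance bound for primitives -/
lemma dist_primitive_le {f h : ℝ → E} {a b x y : ℝ}
    (hi : IntervalIntegrable h volume a b)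
    (hf : ∀ t ∈ Icc a b, f t = f a + ∫ s in a..t, h s)
    (hx : x ∈ Icc a b) (hy : y ∈ Icc a b) (hxy : x ≤ y) :
    dist (f x) (f y) ≤ ∫ s in x..y, ‖h s‖ := by
  have hix : IntervalIntegrable h volume a x :=
    hi.mono_set (by rw [Set.uIcc_of_le hx.1, Set.uIcc_of_le (hx.1.trans hx.2)]; exact Icc_subset_Icc le_rfl hx.2)
  have hiy : IntervalIntegrable h volume a y :=
    hi.mono_set (by rw [Set.uIcc_of_le hy.1, Set.uIcc_of_le (hy.1.trans hy.2)]; exact Icc_subset_Icc le_rfl hy.2)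
  have hxyint : IntervalIntegrable h volume x y :=
    hi.mono_set (by rw [Set.uIcc_of_le hxy, Set.uIcc_of_le (hx.1.trans hx.2)]; exact Icc_subset_Icc hx.1 hy.2)
  have : f y - f x = ∫ s in x..y, h s := by
    rw [hf x hx, hf y hy]
    have := intervalIntegral.integral_interval_sub_left hiy hix
    rw [← this]; abel
  rw [dist_comm, dist_eq_norm, this]
  exact intervalIntegral.norm_integral_le_integral_norm hxy

/-- Variation of a primitive is at most the integral of the norm of the integrand. -/
lemma evar_le_integral {f h : ℝ → E} {a b : ℝ} (hab : a ≤ b)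
    (hi : IntervalIntegrable h volume a b)
    (hf : ∀ t ∈ Icc a b, f t = f a + ∫ s in a..t, h s) :
    eVariationOn f (Icc a b) ≤ ENNReal.ofReal (∫ s in a..b, ‖h s‖) := by
  apply iSup_le
  rintro ⟨k, v, hv, hvs⟩
  set F : ℝ → ℝ := fun t => ∫ s in a..t, ‖h s‖ with hF
  have hsub : ∀ {x y : ℝ}, x ∈ Icc a b → y ∈ Icc a b → IntervalIntegrable (fun s => ‖h s‖) volume x y := by
    intro x y hx hy
    apply hi.norm.mono_set
    rw [Set.uIcc_of_le hab]
    exact Set.uIcc_subset_Icc hx hy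
  have hFmono : ∀ {x y : ℝ}, x ∈ Icc a b → y ∈ Icc a b → x ≤ y → F x ≤ F y := by
    intro x y hx hy hxy
    have : F y - F x = ∫ s in x..y, ‖h s‖ := by
      simp only [hF]
      rw [← intervalIntegral.integral_interval_sub_left
        (hsub (left_mem_Icc.2 hab) hy) (hsub (left_mem_Icc.2 hab) hx)]
    have hnn : 0 ≤ ∫ s in x..y, ‖h s‖ :=
      intervalIntegral.integral_nonneg hxy (fun s _ => norm_nonneg _)
    linarith [this ▸ hnn]
  have key : ∀ i, edist (f (v (i+1))) (f (v i)) ≤ ENNReal.ofReal (F (v (i+1)) - F (v i)) := by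
    intro i
    rw [edist_dist]
    apply ENNReal.ofReal_le_ofReal
    have hd := dist_primitive_le hi hf (hvs i) (hvs (i+1)) (hv (Nat.le_succ i))
    have : F (v (i+1)) - F (v i) = ∫ s in (v i)..(v (i+1)), ‖h s‖ := by
      simp only [hF]
      rw [← intervalIntegral.integral_interval_sub_left
        (hsub (left_mem_Icc.2 hab) (hvs (i+1))) (hsub (left_mem_Icc.2 hab) (hvs i))]
    rw [this, dist_comm]
    exact hd
  calc ∑ i ∈ Finset.range k, edist (f (v (i+1))) (f (v i))
      ≤ ∑ i ∈ Finset.range k, ENNReal.ofReal (F (v (i+1)) - F (v i)) :=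
        Finset.sum_le_sum fun i _ => key i
    _ = ENNReal.ofReal (∑ i ∈ Finset.range k, (F (v (i+1)) - F (v i))) := by
        rw [ENNReal.ofReal_sum_of_nonneg]
        intro i _
        have := hFmono (hvs i) (hvs (i+1)) (hv (Nat.le_succ i))
        linarith
    _ = ENNReal.ofReal (F (v k) - F (v 0)) := by rw [Finset.sum_range_sub (fun i => F (v i))]
    _ ≤ ENNReal.ofReal (∫ s in a..b, ‖h s‖) := by
        apply ENNReal.ofReal_le_ofReal
        have h1 : F (v k) ≤ F b := hFmono (hvs k) (right_mem_Icc.2 hab) (hvs k).2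
        have h2 : F a ≤ F (v 0) := hFmono (left_mem_Icc.2 hab) (hvs 0) (hvs 0).1
        have h3 : F a = 0 := by simp [hF]
        have : F b = ∫ s in a..b, ‖h s‖ := rfl
        linarith

variable {E : Type*} [NormedAddCommGroup E] [NormedSpace ℝ E] [CompleteSpace E]

lemma integral_norm_le_evar {f h : ℝ → E} {a b : ℝ} (hab : a < b)
    (hi : IntervalIntegrable h volume a b)
    (hf : ∀ t ∈ Icc a b, f t = f a + ∫ s in a..t, h s) :
    ENNReal.ofReal (∫ s in a..b, ‖h s‖) ≤ eVariationOn f (Icc a b) := by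
  by_cases hE : eVariationOn f (Icc a b) = ⊤
  · rw [hE]; exact le_top
  set s : Set ℝ := Icc a b with hs
  have hbv : BoundedVariationOn f s := hE
  have hlbv : LocallyBoundedVariationOn f s := hbv.locallyBoundedVariationOn
  have hamem : a ∈ s := left_mem_Icc.2 hab.le
  have hbmem : b ∈ s := right_mem_Icc.2 hab.le
  set g : ℝ → ℝ := fun t => variationOnFromTo f s a t with hg
  have hgmono : MonotoneOn g s := variationOnFromTo.monotoneOn hlbv hamem
  set V : ℝ := (eVariationOn f s).toReal with hV
  have hgb : g b = V := by
    rw [hg]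
    simp only []
    rw [variationOnFromTo.eq_of_le f s hab.le]
    congr 1
    rw [Set.inter_eq_left.2 (Set.Subset.refl _)]
  have hga : g a = 0 := variationOnFromTo.self f s a
  have hdistg : ∀ x ∈ s, ∀ y ∈ s, x ≤ y → dist (f x) (f y) ≤ g y - g x := by
    intro p hp q hq hpq
    have hadd := variationOnFromTo.add hlbv hamem hp hq
    have heq : variationOnFromTo f s p q = (eVariationOn f (s ∩ Icc p q)).toReal :=
      variationOnFromTo.eq_of_le f s hpq
    have hd : dist (f p) (f q) ≤ (eVariationOn f (s ∩ Icc p q)).toReal :=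
      BoundedVariationOn.dist_le (hbv.mono Set.inter_subset_left)
        ⟨hp, le_rfl, hpq⟩ ⟨hq, hpq, le_rfl⟩
    have : g q - g p = variationOnFromTo f s p q := by rw [hg]; simp only []; linarith [hadd]
    rw [this, heq]; exact hd
  -- clamped extension
  set G : ℝ → ℝ := fun t => g (max a (min t b)) with hG
  have hclamp : ∀ t, max a (min t b) ∈ s := fun t =>
    ⟨le_max_left _ _, max_le hab.le (min_le_right _ _)⟩
  have hGmono : Monotone G := by
    intro p q hpq
    exact hgmono (hclamp p) (hclamp q) (max_le_max le_rfl (min_le_min_right _ hpq))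
  have hGeq : ∀ t ∈ s, G t = g t := by
    intro t ht
    rw [hG]; simp only []
    rw [min_eq_left ht.2, max_eq_right ht.1]
  have hGnonneg : ∀ t, 0 ≤ G t := by
    intro t
    have := hgmono hamem (hclamp t) (le_max_left _ _)
    rw [hga] at this; exact this
  have hGleV : ∀ t, G t ≤ V := by
    intro t
    have := hgmono (hclamp t) hbmem (max_le hab.le (min_le_right _ _))
    rw [hgb] at this; exact this
  have hGmeas : Measurable G := hGmono.measurable
  -- indicator function
  set h0 : ℝ → E := (Ioc a b).indicator h with hh0
  have h0int : Integrable h0 volume := by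
    rw [hh0, integrable_indicator_iff measurableSet_Ioc]
    exact hi.1
  -- sequence of scales
  set c : ℕ → ℝ := fun n => ((n : ℝ) + 1)⁻¹ with hc
  have hcpos : ∀ n, 0 < c n := fun n => by positivity
  have hctend : Tendsto c atTop (𝓝 0) := by
    have := tendsto_one_div_add_atTop_nhds_zero_nat (𝕜 := ℝ)
    simpa [hc, one_div] using this
  set Φ : ℕ → ℝ → ℝ≥0∞ :=
    fun n t => ENNReal.ofReal ((c n)⁻¹ * (G (t + c n) - G t)) with hΦ
  -- pointwise a.e. bound via Lebesgue differentiation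
  have key : ∀ᵐ t ∂(volume : Measure ℝ), t ∈ Ioo a b →
      ENNReal.ofReal ‖h0 t‖ ≤ liminf (fun n => Φ n t) atTop := by
    filter_upwards [IsUnifLocDoublingMeasure.ae_tendsto_average
      (μ := (volume : Measure ℝ)) h0int.locallyIntegrable 1] with t ht htmem
    have hδ : Tendsto (fun n => c n / 2) atTop (𝓝[>] 0) := by
      apply tendsto_nhdsWithin_of_tendsto_nhds_of_eventually_within
      · simpa using hctend.div_const 2
      · exact Eventually.of_forall fun n => mem_Ioi.2 (by have := hcpos n; linarith)
    have hmem : ∀ᶠ n in atTop, t ∈ Metric.closedBall (t + c n / 2) (1 * (c n / 2)) := by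
      apply Eventually.of_forall
      intro n
      rw [Metric.mem_closedBall, one_mul, Real.dist_eq]
      rw [abs_of_nonpos (by linarith [hcpos n])]
      linarith
    have havg := ht (fun n => t + c n / 2) (fun n => c n / 2) hδ hmem
    -- eventually compute the average as a difference quotient
    have hev : ∀ᶠ n in atTop,
        (⨍ y in Metric.closedBall (t + c n / 2) (c n / 2), h0 y) =
          (c n)⁻¹ • (f (t + c n) - f t) := by
      have hbt : ∀ᶠ n in atTop, c n ≤ b - t := by
        have := hctend.eventually_le_const (show (0:ℝ) < b - t by linarith [htmem.2])
        exact this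
      filter_upwards [hbt] with n hn
      have hcb : Metric.closedBall (t + c n / 2) (c n / 2) = Icc t (t + c n) := by
        rw [Real.closedBall_eq_Icc]; congr 1 <;> ring
      have htcn : t + c n ∈ s := ⟨by linarith [htmem.1, hcpos n], by linarith⟩
      have hts : t ∈ s := ⟨htmem.1.le, htmem.2.le⟩
      have hIoc : Ioc t (t + c n) ∩ Ioc a b = Ioc t (t + c n) := by
        apply Set.inter_eq_left.2
        exact Ioc_subset_Ioc htmem.1.le (by linarith)
      have hvol : (volume (Icc t (t + c n))).toReal = c n := by
        rw [Real.volume_Icc]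
        rw [ENNReal.toReal_ofReal (by linarith [hcpos n])]
        ring
      rw [hcb, setAverage_eq, measureReal_def, hvol]
      congr 1
      rw [integral_Icc_eq_integral_Ioc, hh0, setIntegral_indicator measurableSet_Ioc, hIoc]
      have hfi : f (t + c n) - f t = ∫ s in t..(t + c n), h s := by
        have hix : IntervalIntegrable h volume a t :=
          hi.mono_set (by rw [Set.uIcc_of_le hts.1, Set.uIcc_of_le hab.le]; exact Icc_subset_Icc le_rfl hts.2)
        have hiy : IntervalIntegrable h volume a (t + c n) :=
          hi.mono_set (by rw [Set.uIcc_of_le htcn.1, Set.uIcc_of_le hab.le]; exact Icc_subset_Icc le_rfl htcn.2)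
        rw [hf t hts, hf (t + c n) htcn]
        rw [← intervalIntegral.integral_interval_sub_left hiy hix]
        abel
      rw [hfi, intervalIntegral.integral_of_le (by linarith [hcpos n] : t ≤ t + c n)]
    have htt : Tendsto (fun n => (c n)⁻¹ • (f (t + c n) - f t)) atTop (𝓝 (h0 t)) :=
      havg.congr' hev
    have hnorm : Tendsto (fun n => ENNReal.ofReal ‖(c n)⁻¹ • (f (t + c n) - f t)‖) atTop
        (𝓝 (ENNReal.ofReal ‖h0 t‖)) :=
      (ENNReal.continuous_ofReal.tendsto _).comp (htt.norm)
    rw [← hnorm.liminf_eq]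
    have hble : ∀ᶠ n in atTop, ENNReal.ofReal ‖(c n)⁻¹ • (f (t + c n) - f t)‖ ≤ Φ n t := by
      have hbt : ∀ᶠ n in atTop, c n ≤ b - t :=
        hctend.eventually_le_const (show (0:ℝ) < b - t by linarith [htmem.2])
      filter_upwards [hbt] with n hn
      apply ENNReal.ofReal_le_ofReal
      rw [norm_smul, norm_inv, Real.norm_eq_abs, abs_of_pos (hcpos n)]
      have hts : t ∈ s := ⟨htmem.1.le, htmem.2.le⟩
      have htcn : t + c n ∈ s := ⟨by linarith [htmem.1, hcpos n], by linarith⟩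
      have hd := hdistg t hts (t + c n) htcn (by linarith [hcpos n])
      rw [dist_eq_norm'] at hd
      rw [← hGeq t hts, ← hGeq (t + c n) htcn] at hd
      exact mul_le_mul_of_nonneg_left hd (by positivity)
    exact liminf_le_liminf hble
  -- measurability of Φ n
  have hΦmeas : ∀ n, Measurable (Φ n) := by
    intro n
    apply Measurable.ennreal_ofReal
    exact (measurable_const.mul ((hGmeas.comp (measurable_id.add_const (c n))).sub hGmeas))
  -- bound each ∫⁻ Φ n
  have hGint : ∀ p q : ℝ, IntervalIntegrable G volume p q :=
    fun p q => hGmono.intervalIntegrable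
  have hGcint : ∀ (d : ℝ), ∀ p q : ℝ, IntervalIntegrable (fun t => G (t + d)) volume p q := by
    intro d p q
    have : Monotone (fun t => G (t + d)) := fun x y hxy => hGmono (by linarith)
    exact this.intervalIntegrable
  have claim : ∀ n, (∫⁻ t in Ioo a b, Φ n t) ≤ ENNReal.ofReal V := by
    intro n
    set cn := c n with hcn
    have hcnpos : 0 < cn := hcpos n
    set ψ : ℝ → ℝ := fun t => cn⁻¹ * (G (t + cn) - G t) with hψ
    have hψnn : ∀ t, 0 ≤ ψ t := by
      intro t
      have : G t ≤ G (t + cn) := hGmono (by linarith)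
      have h2 : (0:ℝ) ≤ cn⁻¹ := by positivity
      exact mul_nonneg h2 (by linarith)
    have hψint : IntegrableOn ψ (Ioo a b) volume := by
      have h1 : IntegrableOn (fun t => G (t + cn)) (Ioo a b) volume :=
        ((hGcint cn a b).1.mono_set Ioo_subset_Ioc_self)
      have h2 : IntegrableOn G (Ioo a b) volume :=
        ((hGint a b).1.mono_set Ioo_subset_Ioc_self)
      exact ((h1.sub h2).const_mul _)
    have hl : (∫⁻ t in Ioo a b, Φ n t) = ENNReal.ofReal (∫ t in Ioo a b, ψ t) := by
      rw [ofReal_integral_eq_lintegral_ofReal hψint (Eventually.of_forall hψnn)]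
    rw [hl]
    apply ENNReal.ofReal_le_ofReal
    have hIoo : (∫ t in Ioo a b, ψ t) = ∫ t in a..b, ψ t := by
      rw [intervalIntegral.integral_of_le hab.le, integral_Ioc_eq_integral_Ioo]
    rw [hIoo]
    have hsplit : (∫ t in a..b, ψ t) = cn⁻¹ * ((∫ t in a..b, G (t + cn)) - ∫ t in a..b, G t) := by
      rw [hψ]
      simp only []
      rw [← intervalIntegral.integral_sub (hGcint cn a b) (hGint a b)]
      rw [← intervalIntegral.integral_const_mul]
    rw [hsplit]
    have htrans : (∫ t in a..b, G (t + cn)) = ∫ t in (a + cn)..(b + cn), G t :=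
      intervalIntegral.integral_comp_add_right G cn
    have hA1 : (∫ t in a..(a+cn), G t) + ∫ t in (a+cn)..(b+cn), G t = ∫ t in a..(b+cn), G t :=
      intervalIntegral.integral_add_adjacent_intervals (hGint a (a+cn)) (hGint (a+cn) (b+cn))
    have hA2 : (∫ t in a..b, G t) + ∫ t in b..(b+cn), G t = ∫ t in a..(b+cn), G t :=
      intervalIntegral.integral_add_adjacent_intervals (hGint a b) (hGint b (b+cn))
    have hub : (∫ t in b..(b+cn), G t) ≤ cn * V := by
      have := intervalIntegral.integral_mono_on (by linarith : b ≤ b + cn) (hGint b (b+cn))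
        (intervalIntegrable_const (c := V)) (fun t _ => hGleV t)
      rw [intervalIntegral.integral_const, smul_eq_mul] at this
      calc (∫ t in b..(b+cn), G t) ≤ (b + cn - b) * V := this
        _ = cn * V := by ring
    have hlb : (0:ℝ) ≤ ∫ t in a..(a+cn), G t :=
      intervalIntegral.integral_nonneg (by linarith) (fun t _ => hGnonneg t)
    have hVnn : 0 ≤ V := ENNReal.toReal_nonneg
    rw [htrans]
    have hdiff : (∫ t in (a+cn)..(b+cn), G t) - (∫ t in a..b, G t) ≤ cn * V := by linarith
    calc cn⁻¹ * ((∫ t in (a+cn)..(b+cn), G t) - ∫ t in a..b, G t)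
        ≤ cn⁻¹ * (cn * V) := mul_le_mul_of_nonneg_left hdiff (by positivity)
      _ = V := by field_simp
  -- assemble
  have lhs_eq : ENNReal.ofReal (∫ s in a..b, ‖h s‖) = ∫⁻ t in Ioo a b, ENNReal.ofReal ‖h0 t‖ := by
    rw [intervalIntegral.integral_of_le hab.le]
    rw [ofReal_integral_eq_lintegral_ofReal hi.1.norm
      (Eventually.of_forall fun t => norm_nonneg _)]
    rw [← setLIntegral_congr (Ioo_ae_eq_Ioc (μ := (volume : Measure ℝ)) (a := a) (b := b))]
    apply setLIntegral_congr_fun measurableSet_Ioo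
    intro t ht
    beta_reduce
    rw [hh0, Set.indicator_of_mem (Ioo_subset_Ioc_self ht)]
  rw [lhs_eq]
  calc (∫⁻ t in Ioo a b, ENNReal.ofReal ‖h0 t‖)
      ≤ ∫⁻ t in Ioo a b, liminf (fun n => Φ n t) atTop := by
        apply lintegral_mono_ae
        filter_upwards [ae_restrict_mem measurableSet_Ioo, ae_restrict_of_ae key]
          with t hmem himp using himp hmem
    _ ≤ liminf (fun n => ∫⁻ t in Ioo a b, Φ n t) atTop :=
        lintegral_liminf_le (fun n => (hΦmeas n))
    _ ≤ ENNReal.ofReal V := by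
        refine le_trans (liminf_le_liminf (Eventually.of_forall claim)) ?_
        simp [liminf_const]
    _ = eVariationOn f s := by rw [hV, ENNReal.ofReal_toReal hE]

lemma norm_primitive_le {f h : ℝ → E} {a b : ℝ} (hab : a ≤ b)
    (hi : IntervalIntegrable h volume a b)
    (hf : ∀ t ∈ Icc a b, f t = f a + ∫ s in a..t, h s) :
    ∀ t ∈ Icc a b, ‖f t‖ ≤ ‖f a‖ + ∫ s in a..b, ‖h s‖ := by
  intro t ht
  have hd := dist_primitive_le hi hf (left_mem_Icc.2 hab) ht ht.1
  have hsub : ∀ {p q : ℝ}, p ∈ Icc a b → q ∈ Icc a b →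
      IntervalIntegrable (fun s => ‖h s‖) volume p q := by
    intro p q hp hq
    apply hi.norm.mono_set
    rw [Set.uIcc_of_le hab]
    exact Set.uIcc_subset_Icc hp hq
  have h2 : (∫ s in a..t, ‖h s‖) ≤ ∫ s in a..b, ‖h s‖ := by
    have hsplit := intervalIntegral.integral_add_adjacent_intervals
      (hsub (left_mem_Icc.2 hab) ht) (hsub ht (right_mem_Icc.2 hab))
    have hnn : 0 ≤ ∫ s in t..b, ‖h s‖ :=
      intervalIntegral.integral_nonneg ht.2 (fun s _ => norm_nonneg _)
    linarith
  rw [dist_eq_norm'] at hd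
  have hfa : f a + (f t - f a) = f t := by abel
  calc ‖f t‖ = ‖f a + (f t - f a)‖ := by rw [hfa]
    _ ≤ ‖f a‖ + ‖f t - f a‖ := norm_add_le _ _
    _ ≤ ‖f a‖ + ∫ s in a..b, ‖h s‖ := by linarith



end Aux

set_option maxHeartbeats 1000000 in
/-- Whitney patching construction: appending to `u|_{[0,τ]}` a Whitney path `upath` from
`u(τ)` to `ubar` (rescaled to `[τ,T]`) yields an absolutely continuous control `upatch` with
`Var_{[0,T]}(upatch) ≤ Var_{[0,τ]}(u) + C|u(τ) - ubar|`, and any solution `xpatch` of the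
differential inequality driven by `upatch` agreeing with `x` at `τ` satisfies
`|xpatch(T) - xpatch(τ)| ≤ M(1 + sup_{[τ,T]}(|xpatch| + |upatch|))(T - τ + C|u(τ) - ubar|)`. -/
theorem whitney_patching {m n : ℕ} (T τ M C : ℝ) (hT : 0 < T) (hτ : 0 ≤ τ)
    (hτT : τ < T) (hM : 0 < M) (hC : 1 ≤ C)
    (U : Set (EuclideanSpace ℝ (Fin m)))
    (u du : ℝ → EuclideanSpace ℝ (Fin m))
    (hdui : IntervalIntegrable du volume 0 T)
    (hu : ∀ t ∈ Icc (0:ℝ) T, u t = u 0 + ∫ s in (0:ℝ)..t, du s)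
    (hUu : ∀ t ∈ Icc (0:ℝ) T, u t ∈ U)
    (x dx : ℝ → EuclideanSpace ℝ (Fin n))
    (hdxi : IntervalIntegrable dx volume 0 T)
    (hx : ∀ t ∈ Icc (0:ℝ) T, x t = x 0 + ∫ s in (0:ℝ)..t, dx s)
    (hxineq : ∀ᵐ t ∂(volume.restrict (Icc (0:ℝ) T)),
      ‖dx t‖ ≤ M * (1 + ‖x t‖ + ‖u t‖) * (1 + ‖du t‖))
    (ubar : EuclideanSpace ℝ (Fin m)) (hubar : ubar ∈ U)
    (upath : ℝ → EuclideanSpace ℝ (Fin m)) (hupathAC : AbsCont upath 0 1)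
    (hupath0 : upath 0 = u τ) (hupath1 : upath 1 = ubar) (hupathU : ∀ r ∈ Icc (0:ℝ) 1, upath r ∈ U)
    (hupathvar : (eVariationOn upath (Icc 0 1)).toReal ≤ C * ‖u τ - ubar‖)
    (upatch : ℝ → EuclideanSpace ℝ (Fin m))
    (hupatch1 : ∀ t ∈ Icc (0:ℝ) τ, upatch t = u t)
    (hupatch2 : ∀ t ∈ Ioc τ T, upatch t = upath ((t - τ) / (T - τ)))
    (xpatch dxpatch : ℝ → EuclideanSpace ℝ (Fin n))
    (dupatch : ℝ → EuclideanSpace ℝ (Fin m))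
    (hdupatchi : IntervalIntegrable dupatch volume τ T)
    (hupatchint : ∀ t ∈ Icc τ T, upatch t = upatch τ + ∫ s in τ..t, dupatch s)
    (hdxpatchi : IntervalIntegrable dxpatch volume τ T)
    (hxpatch : ∀ t ∈ Icc τ T, xpatch t = xpatch τ + ∫ s in τ..t, dxpatch s)
    (hagree : xpatch τ = x τ)
    (hineq : ∀ᵐ t ∂(volume.restrict (Icc τ T)),
      ‖dxpatch t‖ ≤ M * (1 + ‖xpatch t‖ + ‖upatch t‖) * (1 + ‖dupatch t‖)) :
    AbsCont upatch 0 T ∧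
    (eVariationOn upatch (Icc 0 T)).toReal ≤
      (eVariationOn u (Icc 0 τ)).toReal + C * ‖u τ - ubar‖ ∧
    ‖xpatch T - xpatch τ‖ ≤ M * (1 + sSup ((fun t => ‖xpatch t‖ + ‖upatch t‖) '' Icc τ T)) *
      (T - τ + C * ‖u τ - ubar‖) := by

  have hτle : τ ≤ T := hτT.le
  have huτ0 : upatch τ = u τ := hupatch1 τ ⟨hτ, le_rfl⟩
  have hu00 : upatch 0 = u 0 := hupatch1 0 ⟨le_rfl, hτ⟩
  -- du is interval integrable on [0,τ]
  have hdu0τ : IntervalIntegrable du volume 0 τ :=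
    hdui.mono_set (by rw [Set.uIcc_of_le hτ, Set.uIcc_of_le (hτ.trans hτle)]; exact Icc_subset_Icc le_rfl hτle)
  -- the patched derivative
  set f' : ℝ → EuclideanSpace ℝ (Fin m) := fun s => if s ≤ τ then du s else dupatch s with hf'
  have h1 : IntervalIntegrable f' volume 0 τ := by
    rw [intervalIntegrable_iff_integrableOn_Ioc_of_le hτ]
    exact hdu0τ.1.congr_fun (fun s hs => by simp [hf', hs.2]) measurableSet_Ioc
  have h2 : IntervalIntegrable f' volume τ T := by
    rw [intervalIntegrable_iff_integrableOn_Ioc_of_le hτle]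
    exact hdupatchi.1.congr_fun (fun s hs => by simp [hf', not_le.2 hs.1]) measurableSet_Ioc
  have h12 : IntervalIntegrable f' volume 0 T := h1.trans h2
  have e1 : ∀ t' ∈ Icc (0:ℝ) τ, (∫ s in (0:ℝ)..t', f' s) = ∫ s in (0:ℝ)..t', du s := by
    intro t' ht'
    apply intervalIntegral.integral_congr
    intro s hs
    rw [Set.uIcc_of_le ht'.1] at hs
    simp [hf', hs.2.trans ht'.2]
  have habs : AbsCont upatch 0 T := by
    refine ⟨f', h12, ?_⟩
    intro t ht
    by_cases htτ : t ≤ τ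
    · rw [e1 t ⟨ht.1, htτ⟩, hu00, hupatch1 t ⟨ht.1, htτ⟩, hu t ⟨ht.1, htτ.trans hτle⟩]
    · push_neg at htτ
      have h2t : IntervalIntegrable f' volume τ t :=
        h2.mono_set (by rw [Set.uIcc_of_le htτ.le, Set.uIcc_of_le hτle]; exact Icc_subset_Icc le_rfl ht.2)
      have hsplit := intervalIntegral.integral_add_adjacent_intervals h1 h2t
      have e2 : (∫ s in τ..t, f' s) = ∫ s in τ..t, dupatch s := by
        apply intervalIntegral.integral_congr_ae
        apply ae_of_all
        intro s hs
        rw [Set.uIoc_of_le htτ.le] at hs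
        simp [hf', not_le.2 hs.1]
      have e3 := hupatchint t ⟨htτ.le, ht.2⟩
      have e4 := hu τ ⟨hτ, hτle⟩
      rw [← hsplit, e1 τ ⟨hτ, le_rfl⟩, e2, e3, huτ0, hu00, e4]
      abel
  -- reparametrization of the appended path
  have hTτ : (0:ℝ) < T - τ := by linarith
  have hψeq : ∀ r ∈ Icc (0:ℝ) 1, upatch (τ + r * (T - τ)) = upath r := by
    intro r hr
    rcases eq_or_lt_of_le hr.1 with h0 | h0
    · rw [← h0]
      simpa [huτ0] using hupath0.symm
    · have hmem : τ + r * (T - τ) ∈ Ioc τ T := by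
        constructor
        · nlinarith
        · nlinarith [hr.2]
      rw [hupatch2 _ hmem]
      congr 1
      field_simp
      ring
  have hvar2 : eVariationOn upatch (Icc τ T) = eVariationOn upath (Icc 0 1) := by
    have hmono : MonotoneOn (fun r : ℝ => τ + r * (T - τ)) (Icc 0 1) := by
      intro p _ q _ hpq
      simp only []
      nlinarith
    have himage : (fun r : ℝ => τ + r * (T - τ)) '' Icc 0 1 = Icc τ T := by
      ext t
      constructor
      · rintro ⟨r, hr, rfl⟩
        simp only [mem_Icc]
        constructor
        · nlinarith [hr.1, hr.2]
        · nlinarith [hr.1, hr.2]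
      · intro htm
        refine ⟨(t - τ) / (T - τ), ⟨div_nonneg (by linarith [htm.1]) hTτ.le, ?_⟩, by field_simp; ring⟩
        rw [div_le_one hTτ]
        linarith [htm.2]
    rw [← himage, ← eVariationOn.comp_eq_of_monotoneOn upatch _ hmono]
    exact eVariationOn.eq_of_eqOn (fun r hr => hψeq r hr)
  have hvar1 : eVariationOn upatch (Icc 0 τ) = eVariationOn u (Icc 0 τ) :=
    eVariationOn.eq_of_eqOn (fun t ht => hupatch1 t ht)
  have hadd : eVariationOn upatch (Icc 0 τ) + eVariationOn upatch (Icc τ T) =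
      eVariationOn upatch (Icc 0 T) := by
    have h := eVariationOn.Icc_add_Icc upatch (s := Icc (0:ℝ) T) hτ hτle ⟨hτ, hτle⟩
    rw [Set.inter_eq_right.2 (Icc_subset_Icc le_rfl hτle),
      Set.inter_eq_right.2 (Icc_subset_Icc hτ le_rfl), Set.inter_self] at h
    exact h
  have hfin1 : eVariationOn u (Icc 0 τ) ≠ ⊤ :=
    (lt_of_le_of_lt (evar_le_integral hτ hdu0τ (fun t ht => hu t ⟨ht.1, ht.2.trans hτle⟩))
      ENNReal.ofReal_lt_top).ne
  have hfin2 : eVariationOn upatch (Icc τ T) ≠ ⊤ :=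
    (lt_of_le_of_lt (evar_le_integral hτle hdupatchi hupatchint) ENNReal.ofReal_lt_top).ne
  have hfinpath : eVariationOn upath (Icc 0 1) ≠ ⊤ := hvar2 ▸ hfin2
  refine ⟨habs, ?_, ?_⟩
  · -- variation estimate
    calc (eVariationOn upatch (Icc 0 T)).toReal
        = (eVariationOn u (Icc 0 τ)).toReal + (eVariationOn upath (Icc 0 1)).toReal := by
          rw [← hadd, hvar1, hvar2, ENNReal.toReal_add hfin1 hfinpath]
      _ ≤ (eVariationOn u (Icc 0 τ)).toReal + C * ‖u τ - ubar‖ :=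
          add_le_add le_rfl hupathvar
  · -- drift estimate
    set S : ℝ := sSup ((fun t => ‖xpatch t‖ + ‖upatch t‖) '' Icc τ T) with hSdef
    have hbdd : BddAbove ((fun t => ‖xpatch t‖ + ‖upatch t‖) '' Icc τ T) := by
      refine ⟨(‖xpatch τ‖ + ∫ s in τ..T, ‖dxpatch s‖) + (‖upatch τ‖ + ∫ s in τ..T, ‖dupatch s‖), ?_⟩
      rintro _ ⟨t, ht, rfl⟩
      exact add_le_add (norm_primitive_le hτle hdxpatchi hxpatch t ht)
        (norm_primitive_le hτle hdupatchi hupatchint t ht)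
    have hSmem : ∀ t ∈ Icc τ T, ‖xpatch t‖ + ‖upatch t‖ ≤ S :=
      fun t ht => le_csSup hbdd ⟨t, ht, rfl⟩
    have hS0 : 0 ≤ S :=
      le_trans (by positivity) (hSmem τ ⟨le_rfl, hτle⟩)
    have hnormTτ : ‖xpatch T - xpatch τ‖ ≤ ∫ s in τ..T, ‖dxpatch s‖ := by
      have := dist_primitive_le hdxpatchi hxpatch (left_mem_Icc.2 hτle) (right_mem_Icc.2 hτle) hτle
      rwa [dist_eq_norm'] at this
    have hRHSint : IntervalIntegrable (fun t => M * (1 + S) * (1 + ‖dupatch t‖)) volume τ T :=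
      ((intervalIntegrable_const (c := (1:ℝ))).add hdupatchi.norm).const_mul (M * (1 + S))
    have hmono_int : (∫ s in τ..T, ‖dxpatch s‖) ≤
        ∫ t in τ..T, M * (1 + S) * (1 + ‖dupatch t‖) := by
      apply intervalIntegral.integral_mono_ae_restrict hτle hdxpatchi.norm hRHSint
      filter_upwards [hineq, ae_restrict_mem measurableSet_Icc] with t h1 h2
      have h3 := hSmem t h2
      have h4 : (0:ℝ) ≤ 1 + ‖dupatch t‖ := by positivity
      have h5 : M * (1 + ‖xpatch t‖ + ‖upatch t‖) ≤ M * (1 + S) :=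
        mul_le_mul_of_nonneg_left (by linarith) hM.le
      calc ‖dxpatch t‖ ≤ M * (1 + ‖xpatch t‖ + ‖upatch t‖) * (1 + ‖dupatch t‖) := h1
        _ ≤ M * (1 + S) * (1 + ‖dupatch t‖) := mul_le_mul_of_nonneg_right h5 h4
    have hcompute : (∫ t in τ..T, M * (1 + S) * (1 + ‖dupatch t‖)) =
        M * (1 + S) * ((T - τ) + ∫ s in τ..T, ‖dupatch s‖) := by
      rw [intervalIntegral.integral_const_mul]
      congr 1
      rw [intervalIntegral.integral_add (intervalIntegrable_const (c := (1:ℝ))) hdupatchi.norm,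
        intervalIntegral.integral_const, smul_eq_mul, mul_one]
    have hdup_var : (∫ s in τ..T, ‖dupatch s‖) ≤ C * ‖u τ - ubar‖ := by
      have hle := integral_norm_le_evar hτT hdupatchi hupatchint
      have hnn : 0 ≤ ∫ s in τ..T, ‖dupatch s‖ :=
        intervalIntegral.integral_nonneg hτle (fun s _ => norm_nonneg _)
      have h2 := ENNReal.toReal_mono hfin2 hle
      rw [ENNReal.toReal_ofReal hnn] at h2
      rw [hvar2] at h2
      exact h2.trans hupathvar
    have hMS : 0 ≤ M * (1 + S) := mul_nonneg hM.le (by linarith)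
    calc ‖xpatch T - xpatch τ‖
        ≤ ∫ s in τ..T, ‖dxpatch s‖ := hnormTτ
      _ ≤ ∫ t in τ..T, M * (1 + S) * (1 + ‖dupatch t‖) := hmono_int
      _ = M * (1 + S) * ((T - τ) + ∫ s in τ..T, ‖dupatch s‖) := hcompute
      _ ≤ M * (1 + S) * (T - τ + C * ‖u τ - ubar‖) :=
          mul_le_mul_of_nonneg_left (by linarith) hMS
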